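/- Let R be a commutative reduced ring. Then R_K(M) is an sd-ideal if and only if Min(R) with the Zariski topology is locally compact and not compact. -/

import Mathlib

/-- The minimal prime spectrum of `R`, with the subspace (Zariski) topology. -/
abbrev MinSpec (R : Type*) [CommRing R] :=
  {P : PrimeSpectrum R // P.asIdeal ∈ minimalPrimes R}

section Aux

variable {R : Type*} [CommRing R] [IsReduced R]

/-- In a reduced ring, every element of a minimal prime is annihilated by something
outside that prime. -/
lemma exists_mul_eq_zero_of_mem_minimal {P : Ideal R} (hP : P ∈ minimalPrimes R)
    {a : R} (ha : a ∈ P) : ∃ b ∉ P, a * b = 0 := by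
  haveI : P.IsPrime := hP.1.1
  have hmem : algebraMap R (Localization P.primeCompl) a ∈
      IsLocalRing.maximalIdeal (Localization P.primeCompl) :=
    (IsLocalization.AtPrime.to_map_mem_maximal_iff _ P a).mpr ha
  obtain ⟨n, hn⟩ :=
    (haveI := Ring.KrullDimLE.of_isLocalization P hP (Localization P.primeCompl);
      Ring.KrullDimLE.isNilpotent_iff_mem_maximalIdeal.mpr hmem)
  rw [← map_pow] at hn
  obtain ⟨s, hs⟩ := (IsLocalization.map_eq_zero_iff P.primeCompl _ _).mp hn
  refine ⟨(s : R), s.2, ?_⟩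
  have hnil : (a * (s : R)) ^ (n + 1) = 0 := by
    have : (a * (s : R)) ^ (n + 1) = ((s : R) * a ^ n) * (a * (s : R) ^ n) := by ring
    rw [this, hs, zero_mul]
  exact IsNilpotent.eq_zero ⟨n + 1, hnil⟩

lemma isOpen_minSet (a : R) : IsOpen {Q : MinSpec R | a ∉ Q.1.asIdeal} := by
  have h : {Q : MinSpec R | a ∉ Q.1.asIdeal}
      = Subtype.val ⁻¹' ((PrimeSpectrum.basicOpen a : Set (PrimeSpectrum R))) := rfl
  rw [h]
  exact (PrimeSpectrum.basicOpen a).2.preimage continuous_subtype_val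

lemma isClosed_minSet (a : R) : IsClosed {Q : MinSpec R | a ∉ Q.1.asIdeal} := by
  rw [← isOpen_compl_iff]
  have h : {Q : MinSpec R | a ∉ Q.1.asIdeal}ᶜ
      = ⋃ b ∈ {b : R | a * b = 0}, {Q : MinSpec R | b ∉ Q.1.asIdeal} := by
    ext Q
    simp only [Set.mem_compl_iff, Set.mem_setOf_eq, not_not, Set.mem_iUnion, exists_prop]
    constructor
    · intro hQ
      obtain ⟨b, hb, hab⟩ := exists_mul_eq_zero_of_mem_minimal Q.2 hQ
      exact ⟨b, hab, hb⟩
    · rintro ⟨b, hab, hb⟩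
      rcases Q.1.2.mem_or_mem (show a * b ∈ Q.1.asIdeal from hab ▸ Q.1.asIdeal.zero_mem)
        with h | h
      · exact h
      · exact absurd h hb
  rw [h]
  exact isOpen_biUnion fun b _ => isOpen_minSet b

lemma closure_minSet (a : R) :
    closure {Q : MinSpec R | a ∉ Q.1.asIdeal} = {Q : MinSpec R | a ∉ Q.1.asIdeal} :=
  (isClosed_minSet a).closure_eq

lemma mem_nonZeroDivisors_iff_minimal {a : R} :
    a ∈ nonZeroDivisors R ↔ ∀ P ∈ minimalPrimes R, a ∉ P := by
  constructor
  · intro h P hP ha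
    obtain ⟨b, hb, hab⟩ := exists_mul_eq_zero_of_mem_minimal hP ha
    exact hb (by simpa using mem_nonZeroDivisors_iff_right.mp h b (by rwa [mul_comm] at hab) ▸ P.zero_mem)
  · intro h
    rw [mem_nonZeroDivisors_iff_right]
    intro x hx
    by_contra hx0
    have hns : x ∉ sInf (minimalPrimes R) := by
      have : sInf (minimalPrimes R) = (⊥ : Ideal R) := by
        rw [show minimalPrimes R = (⊥ : Ideal R).minimalPrimes from rfl,
          Ideal.sInf_minimalPrimes]
        have := nilradical_eq_zero R
        rw [nilradical] at this
        simpa using this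
      rw [this]
      simpa using hx0
    rw [Submodule.mem_sInf] at hns
    push_neg at hns
    obtain ⟨P, hP, hxP⟩ := hns
    haveI hPp : Ideal.IsPrime P := hP.1.1
    rcases hPp.mem_or_mem (show x * a ∈ P from hx ▸ P.zero_mem) with h' | h'
    · exact hxP h'
    · exact h P hP h'

end Aux

/-- R_K(M) is an sd-ideal iff Min(R) is locally compact and non-compact. -/
theorem rk_sd_iff_locally_compact_noncompact (R : Type*) [CommRing R] [IsReduced R] :
    ((∀ a : R, IsCompact (closure {P : MinSpec R | a ∉ P.1.asIdeal}) →
        a ∉ nonZeroDivisors R) ∧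
      ∀ P ∈ minimalPrimes R,
        ¬ {a : R | IsCompact (closure {Q : MinSpec R | a ∉ Q.1.asIdeal})} ⊆ (P : Set R)) ↔
    (WeaklyLocallyCompactSpace (MinSpec R) ∧ ¬ CompactSpace (MinSpec R)) := by
  simp only [closure_minSet]
  constructor
  · rintro ⟨h1, h2⟩
    constructor
    · refine ⟨fun x => ?_⟩
      obtain ⟨a, haK, haP⟩ := Set.not_subset.mp (h2 x.1.asIdeal x.2)
      exact ⟨{Q : MinSpec R | a ∉ Q.1.asIdeal}, haK, (isOpen_minSet a).mem_nhds haP⟩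
    · intro hcomp
      have hS1 : {Q : MinSpec R | (1 : R) ∉ Q.1.asIdeal} = Set.univ := by
        ext Q
        simp only [Set.mem_setOf_eq, Set.mem_univ, iff_true]
        exact fun hmem => Q.1.2.ne_top ((Ideal.eq_top_iff_one _).mpr hmem)
      have := h1 1 (by rw [hS1]; exact isCompact_univ)
      exact this (one_mem (nonZeroDivisors R))
  · rintro ⟨hwlc, hnc⟩
    constructor
    · intro a hca hnzd
      apply hnc
      have : {Q : MinSpec R | a ∉ Q.1.asIdeal} = Set.univ := by
        ext Q
        simp only [Set.mem_setOf_eq, Set.mem_univ, iff_true]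
        exact mem_nonZeroDivisors_iff_minimal.mp hnzd Q.1.asIdeal Q.2
      rw [this] at hca
      exact isCompact_univ_iff.mp hca
    · intro P hP hsub
      haveI : P.IsPrime := hP.1.1
      set x : MinSpec R := ⟨⟨P, inferInstance⟩, hP⟩ with hx
      obtain ⟨K, hK, hKn⟩ := exists_compact_mem_nhds x
      obtain ⟨U, hUK, hU, hxU⟩ := mem_nhds_iff.mp hKn
      obtain ⟨V, hV, rfl⟩ := isOpen_induced_iff.mp hU
      obtain ⟨W, ⟨a, rfl⟩, hxW, hWV⟩ :=
        PrimeSpectrum.isTopologicalBasis_basic_opens.exists_subset_of_mem_open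
          (show (x : PrimeSpectrum R) ∈ V from hxU) hV
      have hsub2 : {Q : MinSpec R | a ∉ Q.1.asIdeal} ⊆ K := by
        intro Q hQ
        exact hUK (show (Q : PrimeSpectrum R) ∈ V from hWV hQ)
      have hc : IsCompact {Q : MinSpec R | a ∉ Q.1.asIdeal} :=
        hK.of_isClosed_subset (isClosed_minSet a) hsub2
      exact hxW (hsub hc)
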